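/- Let p and q be distinct primes such that (q+1) divides (p−1), and let ζ be a positive integer with ζ ≡ 1 (mod q+1) and ζ dividing q². Then ζp² + pq is divisible by q+1, ζpq + q² is divisible by ζ(q+1), and the positive integers a = (ζp² + pq)/(q+1) and b = (ζpq + q²)/(ζ(q+1)) satisfy 1/a + 1/b = (q+1)/(pq). -/
import Mathlib


theorem stmt_2 (p q : ℕ) (hp : p.Prime) (hq : q.Prime) (hpq : p ≠ q)
    (hdvd : (q + 1) ∣ (p - 1)) (ζ : ℕ) (hζ : 0 < ζ)
    (hζmod : ζ ≡ 1 [MOD q + 1]) (hζdvd : ζ ∣ q ^ 2) :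
    (q + 1) ∣ (ζ * p ^ 2 + p * q) ∧
    (ζ * (q + 1)) ∣ (ζ * p * q + q ^ 2) ∧
    0 < (ζ * p ^ 2 + p * q) / (q + 1) ∧
    0 < (ζ * p * q + q ^ 2) / (ζ * (q + 1)) ∧
    1 / (((ζ * p ^ 2 + p * q) / (q + 1) : ℕ) : ℚ) +
        1 / (((ζ * p * q + q ^ 2) / (ζ * (q + 1)) : ℕ) : ℚ) =
      ((q : ℚ) + 1) / ((p : ℚ) * q) := by
  have hp2 := hp.two_le
  have hq2 := hq.two_le
  have hp1 : p ≡ 1 [MOD q + 1] :=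
    ((Nat.modEq_iff_dvd' (by omega)).mpr hdvd).symm
  have h1 : (q + 1) ∣ (ζ * p ^ 2 + p * q) := by
    have h := (hζmod.mul (hp1.pow 2)).add (hp1.mul_right q)
    have h0 : 1 * 1 ^ 2 + 1 * q ≡ 0 [MOD q + 1] :=
      (Nat.modEq_zero_iff_dvd).mpr ⟨1, by ring⟩
    exact (Nat.modEq_zero_iff_dvd).mp (h.trans h0)
  have h2 : (q + 1) ∣ (ζ * p * q + q ^ 2) := by
    have h := ((hζmod.mul hp1).mul_right q).add (Nat.ModEq.refl (q ^ 2))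
    have h0 : 1 * 1 * q + q ^ 2 ≡ 0 [MOD q + 1] :=
      (Nat.modEq_zero_iff_dvd).mpr ⟨q, by ring⟩
    exact (Nat.modEq_zero_iff_dvd).mp (h.trans h0)
  have hmod : ζ % (q + 1) = 1 := by
    have := hζmod
    unfold Nat.ModEq at this
    rw [this, Nat.mod_eq_of_lt (by omega)]
  have hcop : Nat.Coprime ζ (q + 1) := by
    rw [Nat.coprime_comm]
    unfold Nat.Coprime
    rw [Nat.gcd_rec, hmod]
    simp
  have hζd : ζ ∣ ζ * p * q + q ^ 2 :=
    dvd_add ⟨p * q, by ring⟩ hζdvd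
  have h2' : (ζ * (q + 1)) ∣ (ζ * p * q + q ^ 2) :=
    Nat.Coprime.mul_dvd_of_dvd_of_dvd hcop hζd h2
  have hApos : 0 < ζ * p ^ 2 + p * q := by positivity
  have hBpos : 0 < ζ * p * q + q ^ 2 := by positivity
  refine ⟨h1, h2', Nat.div_pos (Nat.le_of_dvd hApos h1) (by omega),
    Nat.div_pos (Nat.le_of_dvd hBpos h2') (by positivity), ?_⟩
  rw [Nat.cast_div h1 (by positivity), Nat.cast_div h2' (by positivity)]
  have hpQ : (p : ℚ) ≠ 0 := by positivity
  have hqQ : (q : ℚ) ≠ 0 := by positivity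
  have hζQ : (ζ : ℚ) ≠ 0 := by positivity
  have hAQ : ((ζ * p ^ 2 + p * q : ℕ) : ℚ) ≠ 0 := by
    exact_mod_cast hApos.ne'
  have hBQ : ((ζ * p * q + q ^ 2 : ℕ) : ℚ) ≠ 0 := by
    exact_mod_cast hBpos.ne'
  push_cast at hAQ hBQ ⊢
  rw [one_div_div, one_div_div]
  field_simp
  ring
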